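/- arXiv:2506.15602 — 3 statements merged into one kernel-verified Lean document; each statement's English description precedes it below -/
import Mathlib

section
/- Let 1 ≤ ℓ < k ≤ K and let coefficients c_{j,i} ∈ [0,1] be given for ℓ ≤ i ≤ j ≤ k with c_{j,j} = 1 for all j. If for every pair ℓ ≤ i < j ≤ k one has c_{j,i} ≤ Σ_{i'=i+1}^{j} c_{j,i'} · r_min(X_{i'},S_i), then c_{j,ℓ} ≤ h_min(X_j,S_ℓ) for every ℓ < j ≤ k. -/
open Finset

/-- A finite state space partitioned into fitness levels `S_0, …, S_K`
(`lev x = k` means `x ∈ S_k`), together with an elitist row-stochastic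
transition matrix `p`. -/
structure LevelChain (S : Type*) [Fintype S] where
  /-- the number of non-optimal levels -/
  K : ℕ
  /-- the level of each state -/
  lev : S → ℕ
  one_le_K : 1 ≤ K
  lev_le : ∀ x, lev x ≤ K
  level_nonempty : ∀ k ≤ K, ∃ x, lev x = k
  /-- transition probabilities -/
  p : S → S → ℝ
  p_nonneg : ∀ x y, 0 ≤ p x y
  p_row_sum : ∀ x, ∑ y, p x y = 1
  elitist : ∀ x y, lev x < lev y → p x y = 0

variable {S : Type*} [Fintype S]

/-- The fitness level `S_k`. -/
def LevelChain.level (c : LevelChain S) (k : ℕ) : Finset S :=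
  Finset.univ.filter fun x => c.lev x = k

/-- The union of levels `S_{[i,j]} = S_i ∪ ⋯ ∪ S_j`. -/
def LevelChain.levels (c : LevelChain S) (i j : ℕ) : Finset S :=
  Finset.univ.filter fun x => i ≤ c.lev x ∧ c.lev x ≤ j

/-- `p(x, A) = Σ_{y ∈ A} p(x, y)`. -/
def LevelChain.pSet (c : LevelChain S) (x : S) (A : Finset S) : ℝ :=
  ∑ y ∈ A, c.p x y

/-- The standing reachability assumption: from every non-optimal state one can
move to a better level with positive probability. -/
def LevelChain.Reachable (c : LevelChain S) : Prop :=
  ∀ k, 1 ≤ k → k ≤ c.K → ∀ x, c.lev x = k → 0 < c.pSet x (c.levels 0 (k - 1))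

/-- Conditional transition probability `r(x, S_j)`:
`r(x,S_j) = p(x,S_j)/(1 − p(x,S_k))` for `j ≠ k = lev x`, and `r(x,S_k) = 0`. -/
noncomputable def LevelChain.r (c : LevelChain S) (x : S) (j : ℕ) : ℝ :=
  if j = c.lev x then 0
  else c.pSet x (c.level j) / (1 - c.pSet x (c.level (c.lev x)))

/-- `r_min(X_k, S_j) = min_{x ∈ S_k} r(x, S_j)`. -/
noncomputable def LevelChain.rmin (c : LevelChain S) (k j : ℕ) : ℝ :=
  sInf ((fun x => c.r x j) '' {x | c.lev x = k})

/-- `r_max(X_k, S_j) = max_{x ∈ S_k} r(x, S_j)`. -/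
noncomputable def LevelChain.rmax (c : LevelChain S) (k j : ℕ) : ℝ :=
  sSup ((fun x => c.r x j) '' {x | c.lev x = k})

/-- `m` is the mean hitting time of the optimal level `S_0`. -/
def LevelChain.IsMeanHittingTime (c : LevelChain S) (m : S → ℝ) : Prop :=
  (∀ x, 0 ≤ m x) ∧
  (∀ x, c.lev x = 0 → m x = 0) ∧
  (∀ x, c.lev x ≠ 0 → m x = 1 + ∑ y, c.p x y * m y)

/-- `mbar` is the mean level-leaving time on `S ∖ S_0`. -/
def LevelChain.IsLevelLeavingTime (c : LevelChain S) (mbar : S → ℝ) : Prop :=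
  (∀ x, c.lev x ≠ 0 → 0 ≤ mbar x) ∧
  (∀ x, c.lev x ≠ 0 → mbar x = 1 + ∑ y ∈ c.level (c.lev x), c.p x y * mbar y)

/-- `h ℓ x` is the probability of hitting level `S_ℓ` starting from `x`. -/
def LevelChain.IsHitProb (c : LevelChain S) (h : ℕ → S → ℝ) : Prop :=
  (∀ ℓ x, 0 ≤ h ℓ x ∧ h ℓ x ≤ 1) ∧
  (∀ ℓ x, c.lev x = ℓ → h ℓ x = 1) ∧
  (∀ ℓ x, c.lev x < ℓ → h ℓ x = 0) ∧
  (∀ ℓ x, ℓ < c.lev x →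
    h ℓ x = ∑ y ∈ c.levels ℓ (c.lev x), c.p x y * h ℓ y)

namespace LevelChain

variable (c : LevelChain S)

lemma mem_level' {x : S} {k : ℕ} : x ∈ c.level k ↔ c.lev x = k := by
  simp [level]

lemma mem_levels' {x : S} {i j : ℕ} : x ∈ c.levels i j ↔ i ≤ c.lev x ∧ c.lev x ≤ j := by
  simp [levels]

lemma pSet_nonneg' (x : S) (A : Finset S) : 0 ≤ c.pSet x A :=
  Finset.sum_nonneg fun y _ => c.p_nonneg x y

lemma pSet_le_one' (x : S) (A : Finset S) : c.pSet x A ≤ 1 := by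
  rw [← c.p_row_sum x]
  exact Finset.sum_le_sum_of_subset_of_nonneg (Finset.subset_univ A)
    (fun y _ _ => c.p_nonneg x y)

lemma r_nonneg' (x : S) (j : ℕ) : 0 ≤ c.r x j := by
  unfold r
  split
  · exact le_refl 0
  · exact div_nonneg (c.pSet_nonneg' _ _)
      (by linarith [c.pSet_le_one' x (c.level (c.lev x))])

lemma rmin_le_r' (i j : ℕ) (x : S) (hx : c.lev x = i) : c.rmin i j ≤ c.r x j :=
  csInf_le ((Set.toFinite {x : S | c.lev x = i}).image _).bddBelow ⟨x, hx, rfl⟩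

lemma rmin_nonneg' (i j : ℕ) (hi : i ≤ c.K) : 0 ≤ c.rmin i j := by
  obtain ⟨x, hx⟩ := c.level_nonempty i hi
  exact le_csInf ⟨_, ⟨x, hx, rfl⟩⟩ (by rintro _ ⟨y, _, rfl⟩; exact c.r_nonneg' y j)

lemma denom_pos' (hreach : c.Reachable) (x : S) (h1 : 1 ≤ c.lev x) :
    0 < 1 - c.pSet x (c.level (c.lev x)) := by
  classical
  have h3 := hreach _ h1 (c.lev_le x) x rfl
  have hd : Disjoint (c.level (c.lev x)) (c.levels 0 (c.lev x - 1)) := by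
    rw [Finset.disjoint_left]
    intro a ha hb
    rw [c.mem_level'] at ha
    rw [c.mem_levels'] at hb
    omega
  have h4 : c.pSet x (c.level (c.lev x)) + c.pSet x (c.levels 0 (c.lev x - 1)) ≤ 1 := by
    rw [← c.p_row_sum x,
      show c.pSet x (c.level (c.lev x)) + c.pSet x (c.levels 0 (c.lev x - 1))
        = c.pSet x (c.level (c.lev x) ∪ c.levels 0 (c.lev x - 1)) from
        (Finset.sum_union hd).symm]
    exact Finset.sum_le_sum_of_subset_of_nonneg (Finset.subset_univ _)
      fun y _ _ => c.p_nonneg x y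
  linarith

lemma key' (hreach : c.Reachable) (h : ℕ → S → ℝ) (hh : c.IsHitProb h)
    (i j : ℕ) (hi : 1 ≤ i) (hj : j ≤ c.K) :
    ∀ m, i < m → m ≤ j → ∀ x, c.lev x = m →
      (∑ i' ∈ Finset.Icc (i + 1) j, c.rmin i' i * h i' x) ≤ h i x := by
  classical
  obtain ⟨hbd, hone, hzero, hrec⟩ := hh
  intro m
  induction m using Nat.strong_induction_on with
  | _ m IH =>
  intro him hmj x hx
  set F : S → ℝ := fun y => h i y - ∑ i' ∈ Finset.Icc (i + 1) j, c.rmin i' i * h i' y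
    with hF
  -- Step A: per-state inequality on level m
  have stepA : ∀ z, c.lev z = m → (∑ y ∈ c.level m, c.p z y * F y) ≤ F z := by
    intro z hz
    have hE1 : h i z = ∑ y ∈ c.levels i m, c.p z y * h i y := by
      have := hrec i z (by rw [hz]; omega)
      rwa [hz] at this
    have hper : ∀ i' ∈ Finset.Icc (i + 1) j,
        (∑ y ∈ c.levels i m, c.p z y * h i' y)
          = h i' z - (if i' = m then 1 - c.pSet z (c.level m) else 0) := by
      intro i' hi'
      rw [Finset.mem_Icc] at hi'
      rcases lt_trichotomy i' m with hlt | heq | hgt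
      · rw [if_neg (by omega), sub_zero]
        have hsub : ∑ y ∈ c.levels i m, c.p z y * h i' y
            = ∑ y ∈ c.levels i' m, c.p z y * h i' y := by
          refine (Finset.sum_subset ?_ ?_).symm
          · intro y hy
            rw [c.mem_levels'] at hy ⊢
            omega
          · intro y hy hny
            rw [c.mem_levels'] at hy hny
            rw [hzero i' y (by omega), mul_zero]
        rw [hsub]
        have := hrec i' z (by rw [hz]; omega)
        rw [hz] at this
        exact this.symm
      · subst heq
        rw [if_pos rfl, hone i' z hz]
        have h1 : ∑ y ∈ c.levels i i', c.p z y * h i' y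
            = ∑ y ∈ c.level i', c.p z y * h i' y := by
          refine (Finset.sum_subset ?_ ?_).symm
          · intro y hy
            rw [c.mem_level'] at hy
            rw [c.mem_levels']
            omega
          · intro y hy hny
            rw [c.mem_levels'] at hy
            rw [c.mem_level'] at hny
            rw [hzero i' y (by omega), mul_zero]
        rw [h1]
        have h2 : ∑ y ∈ c.level i', c.p z y * h i' y = c.pSet z (c.level i') := by
          refine Finset.sum_congr rfl fun y hy => ?_
          rw [c.mem_level'] at hy
          rw [hone i' y hy, mul_one]
        rw [h2]
        ring
      · rw [if_neg (by omega), sub_zero, hzero i' z (by omega)]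
        refine Finset.sum_eq_zero fun y hy => ?_
        rw [c.mem_levels'] at hy
        rw [hzero i' y (by omega), mul_zero]
    have hS1 : (∑ i' ∈ Finset.Icc (i + 1) j, c.rmin i' i * h i' z)
        = c.rmin m i * (1 - c.pSet z (c.level m))
          + ∑ y ∈ c.levels i m, c.p z y *
              (∑ i' ∈ Finset.Icc (i + 1) j, c.rmin i' i * h i' y) := by
      have hswap : (∑ y ∈ c.levels i m, c.p z y *
              (∑ i' ∈ Finset.Icc (i + 1) j, c.rmin i' i * h i' y))
          = ∑ i' ∈ Finset.Icc (i + 1) j, c.rmin i' i *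
              (∑ y ∈ c.levels i m, c.p z y * h i' y) := by
        simp_rw [Finset.mul_sum]
        rw [Finset.sum_comm]
        refine Finset.sum_congr rfl fun i' _ => Finset.sum_congr rfl fun y _ => by ring
      rw [hswap]
      have hcong : (∑ i' ∈ Finset.Icc (i + 1) j, c.rmin i' i *
              (∑ y ∈ c.levels i m, c.p z y * h i' y))
          = ∑ i' ∈ Finset.Icc (i + 1) j, c.rmin i' i *
              (h i' z - (if i' = m then 1 - c.pSet z (c.level m) else 0)) :=
        Finset.sum_congr rfl fun i' hi' => by rw [hper i' hi']
      rw [hcong]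
      have hsplit : (∑ i' ∈ Finset.Icc (i + 1) j, c.rmin i' i *
              (h i' z - (if i' = m then 1 - c.pSet z (c.level m) else 0)))
          = (∑ i' ∈ Finset.Icc (i + 1) j, c.rmin i' i * h i' z)
            - c.rmin m i * (1 - c.pSet z (c.level m)) := by
        simp_rw [mul_sub, Finset.sum_sub_distrib, mul_ite, mul_zero]
        rw [Finset.sum_ite_eq' (Finset.Icc (i + 1) j) m
          (fun i' => c.rmin i' i * (1 - c.pSet z (c.level m))),
          if_pos (by rw [Finset.mem_Icc]; omega)]
        ring
      rw [hsplit]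
      ring
    have hFz : F z = (∑ y ∈ c.levels i m, c.p z y * F y)
        - c.rmin m i * (1 - c.pSet z (c.level m)) := by
      have hsum : (∑ y ∈ c.levels i m, c.p z y * F y)
          = (∑ y ∈ c.levels i m, c.p z y * h i y)
            - ∑ y ∈ c.levels i m, c.p z y *
                (∑ i' ∈ Finset.Icc (i + 1) j, c.rmin i' i * h i' y) := by
        rw [← Finset.sum_sub_distrib]
        refine Finset.sum_congr rfl fun y _ => by simp [hF]; ring
      rw [hsum, ← hE1]
      simp only [hF]
      rw [hS1]
      ring
    have hun : c.levels i m = c.levels i (m - 1) ∪ c.level m := by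
      ext y
      simp only [levels, level, Finset.mem_filter, Finset.mem_union, Finset.mem_univ,
        true_and]
      omega
    have hdisj : Disjoint (c.levels i (m - 1)) (c.level m) := by
      rw [Finset.disjoint_left]
      intro a ha hb
      rw [c.mem_levels'] at ha
      rw [c.mem_level'] at hb
      omega
    rw [hun, Finset.sum_union hdisj] at hFz
    have hB : c.pSet z (c.level i) ≤ ∑ y ∈ c.levels i (m - 1), c.p z y * F y := by
      have h1 : c.pSet z (c.level i) = ∑ y ∈ c.level i, c.p z y * F y := by
        refine Finset.sum_congr rfl fun y hy => ?_
        rw [c.mem_level'] at hy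
        have hFy : F y = 1 := by
          simp only [hF]
          rw [hone i y hy]
          rw [Finset.sum_eq_zero fun i' hi' => ?_]
          · ring
          · rw [Finset.mem_Icc] at hi'
            rw [hzero i' y (by omega), mul_zero]
        rw [hFy, mul_one]
      rw [h1]
      refine Finset.sum_le_sum_of_subset_of_nonneg ?_ ?_
      · intro y hy
        rw [c.mem_level'] at hy
        rw [c.mem_levels']
        omega
      · intro y hy hny
        rw [c.mem_levels'] at hy
        rw [c.mem_level'] at hny
        have hIH := IH (c.lev y) (by omega) (by omega) (by omega) y rfl
        exact mul_nonneg (c.p_nonneg z y) (by simp only [hF]; linarith)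
    have hrm : c.rmin m i * (1 - c.pSet z (c.level m)) ≤ c.pSet z (c.level i) := by
      have hd := c.denom_pos' hreach z (by omega)
      rw [hz] at hd
      have hle := c.rmin_le_r' m i z hz
      have hr : c.r z i = c.pSet z (c.level i) / (1 - c.pSet z (c.level m)) := by
        unfold r
        rw [hz, if_neg (by omega)]
      rw [hr] at hle
      exact (le_div_iff₀ hd).mp hle
    linarith
  -- Step B: the minimum of F on level m is nonnegative
  have hxmem : x ∈ c.level m := by rw [c.mem_level']; exact hx
  obtain ⟨x0, hx0m, hx0min⟩ :=
    Finset.exists_min_image (c.level m) F ⟨x, hxmem⟩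
  have hx0lev : c.lev x0 = m := (c.mem_level').mp hx0m
  have h1 : c.pSet x0 (c.level m) * F x0 ≤ ∑ y ∈ c.level m, c.p x0 y * F y := by
    rw [pSet, Finset.sum_mul]
    exact Finset.sum_le_sum fun y hy =>
      mul_le_mul_of_nonneg_left (hx0min y hy) (c.p_nonneg x0 y)
  have h2 := stepA x0 hx0lev
  have hd := c.denom_pos' hreach x0 (by omega)
  rw [hx0lev] at hd
  have hF0 : 0 ≤ F x0 := by nlinarith
  have hFx : 0 ≤ F x := le_trans hF0 (hx0min x hxmem)
  simp only [hF] at hFx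
  linarith

end LevelChain

/-- Alternative (backward) lower-bound drift condition: if
`c_{j,j} = 1` and for every `ℓ ≤ i < j ≤ k`,
`c_{j,i} ≤ Σ_{i'=i+1}^{j} c_{j,i'}·r_min(X_{i'},S_i)`,
then `c_{j,ℓ} ≤ h_min(X_j,S_ℓ)` for every `ℓ < j ≤ k`. -/
theorem alt_lower_coefficients_le_hitProb
    (c : LevelChain S) (hreach : c.Reachable)
    (h : ℕ → S → ℝ) (hh : c.IsHitProb h)
    (ℓ k : ℕ) (hℓ : 1 ≤ ℓ) (hℓk : ℓ < k) (hk : k ≤ c.K)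
    (cf : ℕ → ℕ → ℝ)
    (hcf01 : ∀ i j, ℓ ≤ i → i ≤ j → j ≤ k → 0 ≤ cf j i ∧ cf j i ≤ 1)
    (hcfdiag : ∀ j, ℓ ≤ j → j ≤ k → cf j j = 1)
    (hrec : ∀ i j, ℓ ≤ i → i < j → j ≤ k →
      cf j i ≤ ∑ i' ∈ Finset.Icc (i + 1) j, cf j i' * c.rmin i' i) :
    ∀ j, ℓ < j → j ≤ k → ∀ x, c.lev x = j → cf j ℓ ≤ h ℓ x := by
  intro j hj1 hj2 x hx
  have main : ∀ d i, ℓ ≤ i → i + d = j → cf j i ≤ h i x := by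
    intro d
    induction d using Nat.strong_induction_on with
    | _ d IH =>
    intro i hi hij
    rcases Nat.eq_zero_or_pos d with rfl | hd
    · have hij' : i = j := by omega
      subst hij'
      rw [hcfdiag i hi (by omega), hh.2.1 i x (by omega)]
    · have hlt : i < j := by omega
      calc cf j i ≤ ∑ i' ∈ Finset.Icc (i + 1) j, cf j i' * c.rmin i' i :=
            hrec i j hi hlt hj2
        _ ≤ ∑ i' ∈ Finset.Icc (i + 1) j, c.rmin i' i * h i' x := by
            refine Finset.sum_le_sum fun i' hi' => ?_
            rw [Finset.mem_Icc] at hi'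
            rw [mul_comm]
            exact mul_le_mul_of_nonneg_left
              (IH (j - i') (by omega) i' (by omega) (by omega))
              (c.rmin_nonneg' i' i (by omega))
        _ ≤ h i x := c.key' hreach h hh i j (le_trans hℓ hi) (le_trans hj2 hk)
              j hlt le_rfl x hx
  exact main (j - ℓ) ℓ le_rfl (by omega)
end

section
/- Let 1 ≤ ℓ < k ≤ K and let P[ℓ,k] be a path from level k to level ℓ. Let coefficients c_{j,ℓ} ∈ [0,1] be given for ℓ ≤ j ≤ k such that c_{ℓ,ℓ} = 1, c_{j,ℓ} = 0 for every j ∈ (ℓ,k] not belonging to P(ℓ,k], and for every j ∈ P(ℓ,k]: c_{j,ℓ} ≤ min_{x∈S_j} ( r(x,S_ℓ) + Σ_{i∈P(ℓ,j)} r(x,S_i) · c_{i,ℓ} ). Then c_{j,ℓ} ≤ h_min(X_j,S_ℓ) for every ℓ < j ≤ k. -/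
open Finset

variable {S : Type*} [Fintype S]

private lemma sum_levels_eq (c : LevelChain S) (f : S → ℝ) (a b : ℕ) :
    ∑ y ∈ c.levels a b, f y = ∑ i ∈ Finset.Icc a b, ∑ y ∈ c.level i, f y := by
  classical
  rw [← Finset.sum_fiberwise_of_maps_to (g := c.lev) (t := Finset.Icc a b)
      (fun y hy => by
        simp only [LevelChain.levels, Finset.mem_filter, Finset.mem_univ, true_and] at hy
        simpa [Finset.mem_Icc] using hy) f]
  apply Finset.sum_congr rfl
  intro i hi
  simp only [Finset.mem_Icc] at hi
  have hfE : (c.levels a b).filter (fun y => c.lev y = i) = c.level i := by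
    ext y
    simp only [LevelChain.levels, LevelChain.level, Finset.mem_filter, Finset.mem_univ, true_and]
    omega
  rw [hfE]

private lemma pSet_levels_lev (c : LevelChain S) (x : S) :
    c.pSet x (c.levels 0 (c.lev x)) = 1 := by
  unfold LevelChain.pSet
  rw [← c.p_row_sum x]
  apply Finset.sum_subset (Finset.subset_univ _)
  intro y _ hy
  apply c.elitist
  simp only [LevelChain.levels, Finset.mem_filter, Finset.mem_univ, true_and] at hy
  omega

private lemma pSet_split (c : LevelChain S) (x : S) (j : ℕ) (hj : 1 ≤ j) :
    c.pSet x (c.levels 0 j) = c.pSet x (c.levels 0 (j - 1)) + c.pSet x (c.level j) := by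
  classical
  unfold LevelChain.pSet
  have hU : c.levels 0 j = c.levels 0 (j - 1) ∪ c.level j := by
    ext y
    simp only [LevelChain.levels, LevelChain.level, Finset.mem_filter, Finset.mem_univ, true_and,
      Finset.mem_union]
    omega
  rw [hU, Finset.sum_union (by
    rw [Finset.disjoint_left]
    intro a ha hb
    simp only [LevelChain.levels, LevelChain.level, Finset.mem_filter, Finset.mem_univ,
      true_and] at ha hb
    omega)]


/-- Lower-bound drift condition along a path `P[ℓ,k]`
(a set of level indices containing `k` and `ℓ`, all lying in `[ℓ,k]`): if
`c_{ℓ,ℓ} = 1`, `c_{j,ℓ} = 0` for every `j ∈ (ℓ,k]` off the path, and for every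
`j ∈ P(ℓ,k]`,
`c_{j,ℓ} ≤ min_{x∈S_j}( r(x,S_ℓ) + Σ_{i∈P(ℓ,j)} r(x,S_i)·c_{i,ℓ} )`,
then `c_{j,ℓ} ≤ h_min(X_j,S_ℓ)` for every `ℓ < j ≤ k`. -/
theorem path_lower_coefficients_le_hitProb
    (c : LevelChain S) (hreach : c.Reachable)
    (h : ℕ → S → ℝ) (hh : c.IsHitProb h)
    (ℓ k : ℕ) (hℓ : 1 ≤ ℓ) (hℓk : ℓ < k) (hk : k ≤ c.K)
    (P : Finset ℕ) (hPsub : P ⊆ Finset.Icc ℓ k) (hℓP : ℓ ∈ P) (hkP : k ∈ P)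
    (cf : ℕ → ℝ)
    (hcf01 : ∀ j, ℓ ≤ j → j ≤ k → 0 ≤ cf j ∧ cf j ≤ 1)
    (hcfdiag : cf ℓ = 1)
    (hoff : ∀ j, ℓ < j → j ≤ k → j ∉ P → cf j = 0)
    (hrec : ∀ j ∈ P, j ≠ ℓ → ∀ x, c.lev x = j →
      cf j ≤ c.r x ℓ + ∑ i ∈ P ∩ Finset.Ioo ℓ j, c.r x i * cf i) :
    ∀ j, ℓ < j → j ≤ k → ∀ x, c.lev x = j → cf j ≤ h ℓ x := by
  obtain ⟨hh01, hh1, hh0, hhrec⟩ := hh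
  intro j
  induction j using Nat.strong_induction_on with
  | _ j IH =>
  intro hℓj hjk x hx
  by_cases hjP : j ∈ P
  · -- minimizer on level j
    have hjK : j ≤ c.K := hjk.trans hk
    obtain ⟨z0, hz0⟩ := c.level_nonempty j hjK
    have hne : (c.level j).Nonempty := ⟨z0, by simp [LevelChain.level, hz0]⟩
    obtain ⟨z, hzmem, hzmin⟩ := Finset.exists_min_image (c.level j) (h ℓ) hne
    have hzj : c.lev z = j := by
      simpa [LevelChain.level] using hzmem
    have hxmem : x ∈ c.level j := by simp [LevelChain.level, hx]
    have hxz : h ℓ z ≤ h ℓ x := hzmin x hxmem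
    -- positivity of the denominator
    have hDpos : 0 < c.pSet z (c.levels 0 (j - 1)) :=
      hreach j (by omega) hjK z hzj
    have hone : c.pSet z (c.levels 0 (j - 1)) + c.pSet z (c.level j) = 1 := by
      rw [← pSet_split c z j (by omega), ← hzj, pSet_levels_lev]
    set D : ℝ := c.pSet z (c.levels 0 (j - 1)) with hDdef
    have hD1 : 1 - c.pSet z (c.level j) = D := by linarith
    -- the recursion for h at z
    have heq : h ℓ z = ∑ y ∈ c.levels ℓ j, c.p z y * h ℓ y := by
      have := hhrec ℓ z (by rw [hzj]; exact hℓj)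
      rwa [hzj] at this
    -- termwise lower bound
    have hlow : ∀ y ∈ c.levels ℓ j, c.p z y *
        (if c.lev y = ℓ then 1 else if c.lev y = j then h ℓ z else cf (c.lev y))
          ≤ c.p z y * h ℓ y := by
      intro y hy
      simp only [LevelChain.levels, Finset.mem_filter, Finset.mem_univ, true_and] at hy
      apply mul_le_mul_of_nonneg_left _ (c.p_nonneg z y)
      by_cases h1 : c.lev y = ℓ
      · simp [h1, hh1 ℓ y h1]
      · by_cases h2 : c.lev y = j
        · rw [if_neg h1, if_pos h2]
          exact hzmin y (by simp [LevelChain.level, h2])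
        · rw [if_neg h1, if_neg h2]
          exact IH (c.lev y) (by omega) (by omega) (by omega) y rfl
    have hsum : ∑ y ∈ c.levels ℓ j, c.p z y *
        (if c.lev y = ℓ then 1 else if c.lev y = j then h ℓ z else cf (c.lev y))
          ≤ h ℓ z := by
      conv_rhs => rw [heq]
      exact Finset.sum_le_sum hlow
    -- rewrite the lower-bound sum fiberwise
    have hfib : ∑ y ∈ c.levels ℓ j, c.p z y *
        (if c.lev y = ℓ then 1 else if c.lev y = j then h ℓ z else cf (c.lev y))
        = ∑ i ∈ Finset.Icc ℓ j, c.pSet z (c.level i) *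
            (if i = ℓ then 1 else if i = j then h ℓ z else cf i) := by
      rw [sum_levels_eq]
      apply Finset.sum_congr rfl
      intro i _
      rw [LevelChain.pSet, Finset.sum_mul]
      apply Finset.sum_congr rfl
      intro y hy
      have : c.lev y = i := by simpa [LevelChain.level] using hy
      rw [this]
    have hIcc : Finset.Icc ℓ j = insert ℓ (insert j (Finset.Ioo ℓ j)) := by
      ext i
      simp only [Finset.mem_Icc, Finset.mem_insert, Finset.mem_Ioo]
      omega
    have hsplit2 : ∑ i ∈ Finset.Icc ℓ j, c.pSet z (c.level i) *
            (if i = ℓ then 1 else if i = j then h ℓ z else cf i)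
        = c.pSet z (c.level ℓ)
          + (c.pSet z (c.level j) * h ℓ z
          + ∑ i ∈ Finset.Ioo ℓ j, c.pSet z (c.level i) * cf i) := by
      rw [hIcc, Finset.sum_insert (by simp [Finset.mem_Ioo]; omega),
        Finset.sum_insert (by simp [Finset.mem_Ioo])]
      have l1 : (if ℓ = ℓ then (1:ℝ) else if ℓ = j then h ℓ z else cf ℓ) = 1 := by simp
      have l2 : (if j = ℓ then (1:ℝ) else if j = j then h ℓ z else cf j) = h ℓ z := by
        rw [if_neg (by omega), if_pos rfl]
      rw [l1, l2, mul_one]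
      congr 1
      congr 1
      apply Finset.sum_congr rfl
      intro i hi
      simp only [Finset.mem_Ioo] at hi
      rw [if_neg (by omega), if_neg (by omega)]
    -- main inequality: D * h ℓ z ≥ pSet z (level ℓ) + Σ ...
    have hkey : c.pSet z (c.level ℓ) + ∑ i ∈ Finset.Ioo ℓ j, c.pSet z (c.level i) * cf i
        ≤ D * h ℓ z := by
      have := hsum
      rw [hfib, hsplit2] at this
      have hq : c.pSet z (c.level j) = 1 - D := by linarith
      rw [hq] at this
      have hexp : (1 - D) * h ℓ z = h ℓ z - D * h ℓ z := by ring
      linarith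
    -- r values at z
    have hrval : ∀ i, i ≠ j → c.r z i = c.pSet z (c.level i) / D := by
      intro i hi
      rw [LevelChain.r, if_neg (by rw [hzj]; exact hi), hzj, hD1]
    -- the recursion hypothesis at z
    have hrecz := hrec j hjP (by omega) z hzj
    have hsum_r : c.r z ℓ + ∑ i ∈ P ∩ Finset.Ioo ℓ j, c.r z i * cf i
        = c.pSet z (c.level ℓ) / D
          + ∑ i ∈ Finset.Ioo ℓ j, (c.pSet z (c.level i) / D) * cf i := by
      congr 1
      · exact hrval ℓ (by omega)
      · rw [Finset.sum_subset (Finset.inter_subset_right)]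
        · apply Finset.sum_congr rfl
          intro i hi
          simp only [Finset.mem_Ioo] at hi
          rw [hrval i (by omega)]
        · intro i hi hni
          simp only [Finset.mem_Ioo] at hi
          have : i ∉ P := fun hP => hni (Finset.mem_inter.mpr ⟨hP, by simp [Finset.mem_Ioo]; omega⟩)
          rw [hoff i (by omega) (by omega) this, mul_zero]
    have hfinal : cf j ≤ h ℓ z := by
      have h1 : cf j ≤ c.pSet z (c.level ℓ) / D
          + ∑ i ∈ Finset.Ioo ℓ j, (c.pSet z (c.level i) / D) * cf i := by
        rw [← hsum_r]; exact hrecz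
      have h2 : c.pSet z (c.level ℓ) / D
          + ∑ i ∈ Finset.Ioo ℓ j, (c.pSet z (c.level i) / D) * cf i
          = (c.pSet z (c.level ℓ) + ∑ i ∈ Finset.Ioo ℓ j, c.pSet z (c.level i) * cf i) / D := by
        rw [add_div, Finset.sum_div]
        congr 1
        apply Finset.sum_congr rfl
        intro i _
        ring
      rw [h2] at h1
      calc cf j ≤ _ := h1
        _ ≤ h ℓ z := by
          rw [div_le_iff₀ hDpos, mul_comm]
          exact hkey
    exact hfinal.trans hxz
  · rw [hoff j hℓj hjk hjP]
    exact (hh01 ℓ x).1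
end

section
/- Let 1 ≤ ℓ < k ≤ K and let P[ℓ,k] be a path from level k to level ℓ. Let coefficients c_{j,ℓ} ∈ [0,1] be given for ℓ ≤ j ≤ k such that c_{ℓ,ℓ} = 1, c_{j,ℓ} = 1 for every j ∈ (ℓ,k] not belonging to P(ℓ,k], and for every j ∈ P(ℓ,k]: c_{j,ℓ} ≥ max_{x∈S_j} ( r(x, S_{A_j}) + Σ_{i∈P(ℓ,j)} r(x,S_i) · c_{i,ℓ} ), where A_j = { i : ℓ ≤ i < j and i ∉ P(ℓ,j) } and r(x, S_{A_j}) = Σ_{i∈A_j} r(x,S_i). Then c_{j,ℓ} ≥ h_max(X_j,S_ℓ) for every ℓ < j ≤ k. -/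
open Finset

variable {S : Type*} [Fintype S]

lemma levels_sum (c : LevelChain S) (a b : ℕ) (f : S → ℝ) :
    ∑ y ∈ c.levels a b, f y = ∑ i ∈ Finset.Icc a b, ∑ y ∈ c.level i, f y := by
  classical
  rw [show c.levels a b = (Finset.Icc a b).biUnion c.level by
      ext y; simp [LevelChain.levels, LevelChain.level]]
  rw [Finset.sum_biUnion]
  intro i hi j hj hij
  simp only [Finset.disjoint_left, LevelChain.level, Finset.mem_filter]
  rintro y ⟨-, h1⟩ ⟨-, h2⟩; exact hij (h1 ▸ h2 ▸ rfl)

/-- Upper-bound drift condition along a path `P[ℓ,k]`: if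
`c_{ℓ,ℓ} = 1`, `c_{j,ℓ} = 1` for every `j ∈ (ℓ,k]` off the path, and for every
`j ∈ P(ℓ,k]`,
`c_{j,ℓ} ≥ max_{x∈S_j}( r(x, S_{A_j}) + Σ_{i∈P(ℓ,j)} r(x,S_i)·c_{i,ℓ} )`
with `A_j = {i : ℓ ≤ i < j, i ∉ P(ℓ,j)}`, then `c_{j,ℓ} ≥ h_max(X_j,S_ℓ)`
for every `ℓ < j ≤ k`. -/
theorem path_upper_coefficients_ge_hitProb
    (c : LevelChain S) (hreach : c.Reachable)
    (h : ℕ → S → ℝ) (hh : c.IsHitProb h)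
    (ℓ k : ℕ) (hℓ : 1 ≤ ℓ) (hℓk : ℓ < k) (hk : k ≤ c.K)
    (P : Finset ℕ) (hPsub : P ⊆ Finset.Icc ℓ k) (hℓP : ℓ ∈ P) (hkP : k ∈ P)
    (cf : ℕ → ℝ)
    (hcf01 : ∀ j, ℓ ≤ j → j ≤ k → 0 ≤ cf j ∧ cf j ≤ 1)
    (hcfdiag : cf ℓ = 1)
    (hoff : ∀ j, ℓ < j → j ≤ k → j ∉ P → cf j = 1)
    (hrec : ∀ j ∈ P, j ≠ ℓ → ∀ x, c.lev x = j →
      cf j ≥ (∑ i ∈ Finset.Ico ℓ j \ (P ∩ Finset.Ioo ℓ j), c.r x i)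
        + ∑ i ∈ P ∩ Finset.Ioo ℓ j, c.r x i * cf i) :
    ∀ j, ℓ < j → j ≤ k → ∀ x, c.lev x = j → cf j ≥ h ℓ x := by
  classical
  obtain ⟨hh01, hhdiag, hhlt, hhrec⟩ := hh
  intro j
  induction j using Nat.strong_induction_on with
  | _ j IH =>
    intro hℓj hjk x hx
    by_cases hjP : j ∈ P
    · -- on the path
      -- pick a maximizer of h ℓ on level j
      obtain ⟨z, hz⟩ := c.level_nonempty j (hjk.trans hk)
      have hTne : (c.level j).Nonempty := ⟨z, by simp [LevelChain.level, hz]⟩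
      obtain ⟨xs, hxsT, hmax⟩ := (c.level j).exists_max_image (h ℓ) hTne
      have hxs : c.lev xs = j := by
        simpa [LevelChain.level] using hxsT
      -- positivity of the denominator
      have hreach' := hreach j (by omega) (hjk.trans hk) xs hxs
      have hdisj : Disjoint (c.level j) (c.levels 0 (j - 1)) := by
        simp only [Finset.disjoint_left, LevelChain.level, LevelChain.levels,
          Finset.mem_filter]
        rintro y ⟨-, h1⟩ ⟨-, -, h2⟩; omega
      have hsum_le : c.pSet xs (c.level j) + c.pSet xs (c.levels 0 (j - 1)) ≤ 1 := by
        rw [← c.p_row_sum xs, LevelChain.pSet, LevelChain.pSet,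
          ← Finset.sum_union hdisj]
        exact Finset.sum_le_sum_of_subset_of_nonneg (Finset.subset_univ _)
          (fun y _ _ => c.p_nonneg xs y)
      set D : ℝ := 1 - c.pSet xs (c.level j) with hD
      have hDpos : 0 < D := by simp only [hD]; linarith
      -- decompose h ℓ xs
      have hdecomp : h ℓ xs = (∑ y ∈ c.level j, c.p xs y * h ℓ y)
          + ∑ i ∈ Finset.Ico ℓ j, ∑ y ∈ c.level i, c.p xs y * h ℓ y := by
        rw [hhrec ℓ xs (by omega), hxs, levels_sum,
          show Finset.Icc ℓ j = insert j (Finset.Ico ℓ j) by ext i; simp; omega,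
          Finset.sum_insert (by simp)]
      -- bound the same-level term
      have hbj : ∑ y ∈ c.level j, c.p xs y * h ℓ y
          ≤ c.pSet xs (c.level j) * h ℓ xs := by
        rw [LevelChain.pSet, Finset.sum_mul]
        exact Finset.sum_le_sum fun y hy =>
          mul_le_mul_of_nonneg_left (hmax y hy) (c.p_nonneg xs y)
      -- bound the lower-level terms
      have hbi : ∀ i ∈ Finset.Ico ℓ j, ∑ y ∈ c.level i, c.p xs y * h ℓ y
          ≤ c.pSet xs (c.level i) * cf i := by
        intro i hi
        simp only [Finset.mem_Ico] at hi
        rw [LevelChain.pSet, Finset.sum_mul]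
        refine Finset.sum_le_sum fun y hy => ?_
        have hy' : c.lev y = i := by simpa [LevelChain.level] using hy
        have hhy : h ℓ y ≤ cf i := by
          rcases eq_or_lt_of_le hi.1 with heq | hlt
          · rw [← heq, hcfdiag]; exact le_of_eq (hhdiag ℓ y (heq ▸ hy'))
          · exact IH i hi.2 hlt (by omega) y hy'
        exact mul_le_mul_of_nonneg_left hhy (c.p_nonneg xs y)
      have hmain : D * h ℓ xs ≤ ∑ i ∈ Finset.Ico ℓ j, c.pSet xs (c.level i) * cf i := by
        have := hbi
        have h1 : h ℓ xs ≤ c.pSet xs (c.level j) * h ℓ xs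
            + ∑ i ∈ Finset.Ico ℓ j, c.pSet xs (c.level i) * cf i := by
          rw [hdecomp] at *
          have h2 := Finset.sum_le_sum hbi
          linarith
        simp only [hD]; nlinarith [h1]
      -- turn p-sums into r-values
      have hrval : ∀ i ∈ Finset.Ico ℓ j, c.r xs i = c.pSet xs (c.level i) / D := by
        intro i hi
        simp only [Finset.mem_Ico] at hi
        rw [LevelChain.r, if_neg (by omega : ¬ i = c.lev xs), hxs]
      have hdiv : h ℓ xs ≤ ∑ i ∈ Finset.Ico ℓ j, c.r xs i * cf i := by
        have heq : ∑ i ∈ Finset.Ico ℓ j, c.r xs i * cf i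
            = (∑ i ∈ Finset.Ico ℓ j, c.pSet xs (c.level i) * cf i) / D := by
          rw [Finset.sum_div]
          exact Finset.sum_congr rfl fun i hi => by
            rw [hrval i hi, div_mul_eq_mul_div]
        rw [heq, le_div_iff₀ hDpos, mul_comm]
        exact hmain
      -- split the sum according to the path
      have hQsub : P ∩ Finset.Ioo ℓ j ⊆ Finset.Ico ℓ j := by
        intro i hi; simp only [Finset.mem_inter, Finset.mem_Ioo] at hi
        simp only [Finset.mem_Ico]; omega
      have hsplit2 : ∑ i ∈ Finset.Ico ℓ j, c.r xs i * cf i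
          = (∑ i ∈ Finset.Ico ℓ j \ (P ∩ Finset.Ioo ℓ j), c.r xs i * cf i)
          + ∑ i ∈ P ∩ Finset.Ioo ℓ j, c.r xs i * cf i :=
        (Finset.sum_sdiff hQsub).symm
      have hones : ∀ i ∈ Finset.Ico ℓ j \ (P ∩ Finset.Ioo ℓ j), cf i = 1 := by
        intro i hi
        simp only [Finset.mem_sdiff, Finset.mem_Ico, Finset.mem_inter,
          Finset.mem_Ioo] at hi
        obtain ⟨⟨h1, h2⟩, h3⟩ := hi
        rcases eq_or_lt_of_le h1 with heq | hlt
        · rw [← heq]; exact hcfdiag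
        · exact hoff i hlt (by omega) fun hiP => h3 ⟨hiP, hlt, h2⟩
      have hfinal : ∑ i ∈ Finset.Ico ℓ j, c.r xs i * cf i
          ≤ (∑ i ∈ Finset.Ico ℓ j \ (P ∩ Finset.Ioo ℓ j), c.r xs i)
          + ∑ i ∈ P ∩ Finset.Ioo ℓ j, c.r xs i * cf i := by
        rw [hsplit2]
        gcongr with i hi
        rw [hones i hi, mul_one]
      have hx_le : h ℓ x ≤ h ℓ xs :=
        hmax x (by simp [LevelChain.level, hx])
      have := hrec j hjP (by omega) xs hxs
      linarith
    · -- off the path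
      rw [hoff j hℓj hjk hjP]
      exact (hh01 ℓ x).2
end
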